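/- Let X be a real normed space and let x, y ∈ X be such that ‖u+v‖ ≥ ‖u−v‖ for all u, v ∈ H_{x,y}. Let z = (1/2)(x+y). Then z and −z belong to G_n for every n ≥ 1; consequently, if the diameters d_n tend to 0 and hence the intersection ∩_{n≥1} G_n contains at most the pair {z, −z} and its negatives, this intersection equals {z, −z}. -/
import Mathlib


/-- `Hset x y = {u : ‖u − x‖ = ‖u − y‖ = (1/2)‖x − y‖}`. -/
def Hset {S : Type*} [NormedAddCommGroup S] (x y : S) : Set S :=
  {u : S | ‖u - x‖ = ‖x - y‖ / 2 ∧ ‖u - y‖ = ‖x - y‖ / 2}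

/-- For a set `S`, `dSet S = sup { min{‖u − v‖, ‖u + v‖} : u, v ∈ S }`. -/
noncomputable def dSet {X : Type*} [NormedAddCommGroup X] (S : Set X) : ℝ :=
  sSup ((fun p : X × X => min ‖p.1 - p.2‖ ‖p.1 + p.2‖) '' (S ×ˢ S))

/-- The nested sequence of sets from the paper:
`G x y 0 = H_{x,y} ∪ H_{−x,−y}` (the paper's `G_1`) and
`G x y (n+1) = {u ∈ G x y n : min{‖u − v‖, ‖u + v‖} ≤ d_n / 2 for all v ∈ G x y n}`. -/
noncomputable def G {X : Type*} [NormedAddCommGroup X] (x y : X) : ℕ → Set X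
  | 0 => Hset x y ∪ Hset (-x) (-y)
  | n + 1 =>
      {u ∈ G x y n | ∀ v ∈ G x y n, min ‖u - v‖ ‖u + v‖ ≤ dSet (G x y n) / 2}

theorem intersection_of_G_is_center
    {X : Type*} [NormedAddCommGroup X] [NormedSpace ℝ X]
    (x y : X) (h : ∀ u ∈ Hset x y, ∀ v ∈ Hset x y, ‖u + v‖ ≥ ‖u - v‖) :
    (∀ n : ℕ, ((1 : ℝ) / 2) • (x + y) ∈ G x y n ∧ -(((1 : ℝ) / 2) • (x + y)) ∈ G x y n) ∧
    (⋂ n : ℕ, G x y n) = {((1 : ℝ) / 2) • (x + y), -(((1 : ℝ) / 2) • (x + y))} := by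
  classical
  set z : X := ((1 : ℝ) / 2) • (x + y) with hzdef
  have half : ‖((1 : ℝ) / 2)‖ = 1 / 2 := by norm_num [Real.norm_eq_abs]
  have hnxy : ‖(-x) - (-y)‖ = ‖x - y‖ := by
    rw [show (-x) - (-y) = -(x - y) by abel, norm_neg]
  have hzH : z ∈ Hset x y := by
    constructor
    · have e : z - x = ((1 : ℝ) / 2) • (y - x) := by rw [hzdef]; module
      rw [e, norm_smul, half, norm_sub_rev]; ring
    · have e : z - y = ((1 : ℝ) / 2) • (x - y) := by rw [hzdef]; module
      rw [e, norm_smul, half]; ring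
  have hnegzH : -z ∈ Hset (-x) (-y) := by
    constructor
    · have e : -z - (-x) = ((1 : ℝ) / 2) • (x - y) := by rw [hzdef]; module
      rw [e, norm_smul, half, hnxy]; ring
    · have e : -z - (-y) = ((1 : ℝ) / 2) • (y - x) := by rw [hzdef]; module
      rw [e, norm_smul, half, hnxy, norm_sub_rev]; ring
  have negH' : ∀ u : X, u ∈ Hset (-x) (-y) → -u ∈ Hset x y := by
    rintro u ⟨h1, h2⟩
    constructor
    · rw [show -u - x = -(u - -x) by abel, norm_neg, h1, hnxy]
    · rw [show -u - y = -(u - -y) by abel, norm_neg, h2, hnxy]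
  have negH : ∀ u : X, u ∈ Hset x y → -u ∈ Hset (-x) (-y) := by
    rintro u ⟨h1, h2⟩
    constructor
    · rw [show -u - -x = -(u - x) by abel, norm_neg, hnxy, h1]
    · rw [show -u - -y = -(u - y) by abel, norm_neg, hnxy, h2]
  have reflH : ∀ u : X, u ∈ Hset x y → x + y - u ∈ Hset x y := by
    rintro u ⟨h1, h2⟩
    constructor
    · rw [show x + y - u - x = -(u - y) by abel, norm_neg, h2]
    · rw [show x + y - u - y = -(u - x) by abel, norm_neg, h1]
  have Gsucc : ∀ (n : ℕ) (u : X), u ∈ G x y (n + 1) ↔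
      u ∈ G x y n ∧ ∀ v ∈ G x y n, min ‖u - v‖ ‖u + v‖ ≤ dSet (G x y n) / 2 :=
    fun n u => Iff.rfl
  have memG0 : ∀ u : X, u ∈ G x y 0 ↔ u ∈ Hset x y ∨ u ∈ Hset (-x) (-y) := fun u => Iff.rfl
  have G0bound : ∀ u ∈ G x y 0, ‖u‖ ≤ ‖x‖ + ‖x - y‖ / 2 := by
    intro u hu
    rcases (memG0 u).mp hu with hu | hu
    · calc ‖u‖ = ‖(u - x) + x‖ := by rw [sub_add_cancel]
        _ ≤ ‖u - x‖ + ‖x‖ := norm_add_le _ _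
        _ = ‖x‖ + ‖x - y‖ / 2 := by rw [hu.1]; ring
    · calc ‖u‖ = ‖(u - -x) + (-x)‖ := by rw [sub_add_cancel]
        _ ≤ ‖u - -x‖ + ‖-x‖ := norm_add_le _ _
        _ = ‖x‖ + ‖x - y‖ / 2 := by rw [hu.1, hnxy, norm_neg]; ring
  have Gstep : ∀ n : ℕ, G x y (n + 1) ⊆ G x y n := fun n u hu => ((Gsucc n u).mp hu).1
  have Gsub : ∀ n : ℕ, G x y n ⊆ G x y 0 := by
    intro n
    induction n with
    | zero => exact subset_rfl
    | succ n ih => exact fun u hu => ih (Gstep n hu)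
  have bdd : ∀ n : ℕ,
      BddAbove ((fun p : X × X => min ‖p.1 - p.2‖ ‖p.1 + p.2‖) '' (G x y n ×ˢ G x y n)) := by
    intro n
    refine ⟨2 * (‖x‖ + ‖x - y‖ / 2), ?_⟩
    rintro r ⟨⟨a, b⟩, ⟨ha, hb⟩, rfl⟩
    have ha' := G0bound a (Gsub n ha)
    have hb' := G0bound b (Gsub n hb)
    have hab : ‖a - b‖ ≤ ‖a‖ + ‖b‖ := norm_sub_le a b
    calc min ‖a - b‖ ‖a + b‖ ≤ ‖a - b‖ := min_le_left _ _
      _ ≤ 2 * (‖x‖ + ‖x - y‖ / 2) := by linarith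
  have mind : ∀ n : ℕ, ∀ a ∈ G x y n, ∀ b ∈ G x y n,
      min ‖a - b‖ ‖a + b‖ ≤ dSet (G x y n) :=
    fun n a ha b hb => le_csSup (bdd n) ⟨(a, b), ⟨ha, hb⟩, rfl⟩
  have key : ∀ n : ℕ, (z ∈ G x y n ∧ -z ∈ G x y n) ∧
      (∀ u ∈ G x y n, -u ∈ G x y n) ∧
      (∀ u ∈ G x y n, u ∈ Hset x y → x + y - u ∈ G x y n) := by
    intro n
    induction n with
    | zero =>
      refine ⟨⟨Or.inl hzH, Or.inr hnegzH⟩, ?_, ?_⟩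
      · intro u hu
        rcases (memG0 u).mp hu with hu | hu
        · exact Or.inr (negH u hu)
        · exact Or.inl (negH' u hu)
      · intro u _ huH
        exact Or.inl (reflH u huH)
    | succ n ih =>
      obtain ⟨⟨hzn, hznn⟩, hneg, hrefl⟩ := ih
      have hzbound : ∀ v ∈ G x y n, min ‖z - v‖ ‖z + v‖ ≤ dSet (G x y n) / 2 := by
        intro v hv
        rcases (memG0 v).mp (Gsub n hv) with hvH | hvH
        · have hw : x + y - v ∈ G x y n := hrefl v hv hvH
          have hwH : x + y - v ∈ Hset x y := reflH v hvH
          have h1 : min ‖v - (x + y - v)‖ ‖v + (x + y - v)‖ ≤ dSet (G x y n) :=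
            mind n v hv _ hw
          rw [min_eq_left (h v hvH _ hwH)] at h1
          have h3 : ‖z - v‖ = ‖v - (x + y - v)‖ / 2 := by
            have e : z - v = ((1 : ℝ) / 2) • (-(v - (x + y - v))) := by rw [hzdef]; module
            rw [e, norm_smul, half, norm_neg]; ring
          have h4 := min_le_left ‖z - v‖ ‖z + v‖
          linarith
        · have hnv : -v ∈ G x y n := hneg v hv
          have hnvH : -v ∈ Hset x y := negH' v hvH
          have hw : x + y - (-v) ∈ G x y n := hrefl _ hnv hnvH
          have hwH : x + y - (-v) ∈ Hset x y := reflH _ hnvH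
          have h1 : min ‖(-v) - (x + y - (-v))‖ ‖(-v) + (x + y - (-v))‖ ≤ dSet (G x y n) :=
            mind n _ hnv _ hw
          rw [min_eq_left (h _ hnvH _ hwH)] at h1
          have h3 : ‖z + v‖ = ‖(-v) - (x + y - (-v))‖ / 2 := by
            have e : z + v = ((1 : ℝ) / 2) • (-((-v) - (x + y - (-v)))) := by rw [hzdef]; module
            rw [e, norm_smul, half, norm_neg]; ring
          have h4 := min_le_right ‖z - v‖ ‖z + v‖
          linarith
      refine ⟨⟨(Gsucc n z).mpr ⟨hzn, hzbound⟩, (Gsucc n (-z)).mpr ⟨hznn, ?_⟩⟩, ?_, ?_⟩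
      · intro v hv
        rw [show ‖-z - v‖ = ‖z + v‖ by rw [show -z - v = -(z + v) by abel, norm_neg],
            show ‖-z + v‖ = ‖z - v‖ by rw [show -z + v = -(z - v) by abel, norm_neg],
            min_comm]
        exact hzbound v hv
      · intro u hu
        obtain ⟨hun, hub⟩ := (Gsucc n u).mp hu
        refine (Gsucc n (-u)).mpr ⟨hneg u hun, ?_⟩
        intro v hv
        rw [show ‖-u - v‖ = ‖u + v‖ by rw [show -u - v = -(u + v) by abel, norm_neg],
            show ‖-u + v‖ = ‖u - v‖ by rw [show -u + v = -(u - v) by abel, norm_neg],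
            min_comm]
        exact hub v hv
      · intro u hu huH
        obtain ⟨hun, hub⟩ := (Gsucc n u).mp hu
        refine (Gsucc n (x + y - u)).mpr ⟨hrefl u hun huH, ?_⟩
        intro v hv
        rcases (memG0 v).mp (Gsub n hv) with hvH | hvH
        · have hs' : x + y - v ∈ G x y n := hrefl v hv hvH
          have hs'H : x + y - v ∈ Hset x y := reflH v hvH
          have h1 := hub _ hs'
          rw [min_eq_left (h u huH _ hs'H)] at h1
          calc min ‖x + y - u - v‖ ‖x + y - u + v‖ ≤ ‖x + y - u - v‖ := min_le_left _ _
            _ = ‖u - (x + y - v)‖ := by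
                rw [show x + y - u - v = -(u - (x + y - v)) by abel, norm_neg]
            _ ≤ dSet (G x y n) / 2 := h1
        · have hnv : -v ∈ G x y n := hneg v hv
          have hnvH : -v ∈ Hset x y := negH' v hvH
          have hs' : x + y - (-v) ∈ G x y n := hrefl _ hnv hnvH
          have hs'H : x + y - (-v) ∈ Hset x y := reflH _ hnvH
          have h1 := hub _ hs'
          rw [min_eq_left (h u huH _ hs'H)] at h1
          calc min ‖x + y - u - v‖ ‖x + y - u + v‖ ≤ ‖x + y - u + v‖ := min_le_right _ _
            _ = ‖u - (x + y - (-v))‖ := by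
                rw [show x + y - u + v = -(u - (x + y - (-v))) by abel, norm_neg]
            _ ≤ dSet (G x y n) / 2 := h1
  have dnonneg : ∀ n : ℕ, 0 ≤ dSet (G x y n) := by
    intro n
    have hz := (key n).1.1
    have h1 := mind n z hz z hz
    have h0 : (0 : ℝ) ≤ min ‖z - z‖ ‖z + z‖ := le_min (norm_nonneg _) (norm_nonneg _)
    linarith
  have dhalf : ∀ n : ℕ, dSet (G x y (n + 1)) ≤ dSet (G x y n) / 2 := by
    intro n
    apply Real.sSup_le
    · rintro r ⟨⟨a, b⟩, ⟨ha, hb⟩, rfl⟩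
      exact ((Gsucc n a).mp ha).2 b (Gstep n hb)
    · linarith [dnonneg n]
  have dle : ∀ n : ℕ, dSet (G x y n) ≤ dSet (G x y 0) / 2 ^ n := by
    intro n
    induction n with
    | zero => simp
    | succ n ih =>
      calc dSet (G x y (n + 1)) ≤ dSet (G x y n) / 2 := dhalf n
        _ ≤ (dSet (G x y 0) / 2 ^ n) / 2 := by linarith
        _ = dSet (G x y 0) / 2 ^ (n + 1) := by ring
  refine ⟨fun n => (key n).1, ?_⟩
  ext u
  simp only [Set.mem_iInter, Set.mem_insert_iff, Set.mem_singleton_iff]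
  constructor
  · intro hu
    have hc : ∀ n : ℕ, min ‖u - z‖ ‖u + z‖ ≤ dSet (G x y 0) / 2 ^ (n + 1) := by
      intro n
      have h1 := ((Gsucc n u).mp (hu (n + 1))).2 z (key n).1.1
      calc min ‖u - z‖ ‖u + z‖ ≤ dSet (G x y n) / 2 := h1
        _ ≤ (dSet (G x y 0) / 2 ^ n) / 2 := by linarith [dle n]
        _ = dSet (G x y 0) / 2 ^ (n + 1) := by ring
    have hc0 : min ‖u - z‖ ‖u + z‖ ≤ 0 := by
      by_contra hlt
      push_neg at hlt
      obtain ⟨n, hn⟩ := pow_unbounded_of_one_lt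
        (dSet (G x y 0) / min ‖u - z‖ ‖u + z‖) (one_lt_two (α := ℝ))
      have h2n : (0 : ℝ) < 2 ^ n := by positivity
      have h2n1 : (0 : ℝ) < 2 ^ (n + 1) := by positivity
      have h3 : min ‖u - z‖ ‖u + z‖ * 2 ^ (n + 1) ≤ dSet (G x y 0) :=
        (le_div_iff₀ h2n1).mp (hc n)
      have h4 : dSet (G x y 0) < 2 ^ n * min ‖u - z‖ ‖u + z‖ := by
        rw [div_lt_iff₀ hlt] at hn; linarith [hn]
      have e : (2 : ℝ) ^ (n + 1) = 2 * 2 ^ n := by ring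
      nlinarith
    rcases min_le_iff.mp hc0 with h1 | h1
    · left
      have : u - z = 0 := norm_le_zero_iff.mp h1
      exact sub_eq_zero.mp this
    · right
      have : u + z = 0 := norm_le_zero_iff.mp h1
      exact eq_neg_of_add_eq_zero_left this
  · rintro (rfl | rfl)
    · exact fun n => (key n).1.1
    · exact fun n => (key n).1.2
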